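/- arXiv:2406.15852 — 2 statements merged into one kernel-verified Lean document; each statement's English description precedes it below -/
import Mathlib

section
/- For any pair of vertices a, b in a connected graph G with unit edge resistances, the expected commute time of the simple random walk satisfies E[C_{ab}] = 2·|E(G)|·R_{ab}, where R_{ab} is the effective resistance between a and b. -/
open Matrix Finset

lemma sum_lapMatrix_mulVec {V : Type*} [Fintype V] [DecidableEq V]
    (G : SimpleGraph V) [DecidableRel G.Adj] (x : V → ℝ) :
    ∑ v, (G.lapMatrix ℝ *ᵥ x) v = 0 := by
  have h1 : ∑ v, (G.lapMatrix ℝ *ᵥ x) v = (fun _ ↦ (1:ℝ)) ⬝ᵥ (G.lapMatrix ℝ *ᵥ x) := by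
    simp [dotProduct]
  rw [h1, dotProduct_mulVec, ← mulVec_transpose, (G.isSymm_lapMatrix ℝ).eq,
    G.lapMatrix_mulVec_const_eq_zero]
  simp

/-- Commute time identity (Chandra et al.): in a connected graph `G` with unit
edge resistances, `E[C_{ab}] = 2·|E|·R_{ab}`. Expected hitting times `hab`
(to `b`) and `hba` (to `a`) of the simple random walk are characterized by
their harmonic equations; the effective resistance
`R_{ab} = (e_a - e_b)ᵀ L⁺ (e_a - e_b)` is expressed via any solution `f` of
`L f = e_a - e_b` as `(e_a - e_b) ⬝ᵥ f`. -/
theorem commute_time_eq_two_mul_edges_mul_resistance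
    {V : Type*} [Fintype V] [DecidableEq V]
    (G : SimpleGraph V) [DecidableRel G.Adj] (hG : G.Connected)
    (a b : V)
    (hab hba : V → ℝ)
    (hab_b : hab b = 0)
    (hab_eq : ∀ v, v ≠ b →
      (G.degree v : ℝ) * hab v = (G.degree v : ℝ) + ∑ u ∈ G.neighborFinset v, hab u)
    (hba_a : hba a = 0)
    (hba_eq : ∀ v, v ≠ a →
      (G.degree v : ℝ) * hba v = (G.degree v : ℝ) + ∑ u ∈ G.neighborFinset v, hba u)
    (f : V → ℝ)
    (hf : G.lapMatrix ℝ *ᵥ f = (Pi.single a 1 - Pi.single b 1)) :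
    hab a + hba b
      = 2 * (G.edgeFinset.card : ℝ) * ((Pi.single a 1 - Pi.single b 1) ⬝ᵥ f) := by
  set m : ℝ := (G.edgeFinset.card : ℝ) with hm
  have hdegsum : ∑ v, (G.degree v : ℝ) = 2 * m := by
    rw [hm]
    have := G.sum_degrees_eq_twice_card_edges
    exact_mod_cast congrArg (Nat.cast : ℕ → ℝ) this
  -- general lemma: a function with these harmonic equations has L *ᵥ h = deg - 2m • e_c
  have key : ∀ (c : V) (h : V → ℝ),
      (∀ v, v ≠ c → (G.degree v : ℝ) * h v = (G.degree v : ℝ) + ∑ u ∈ G.neighborFinset v, h u) →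
      G.lapMatrix ℝ *ᵥ h = (fun v => (G.degree v : ℝ)) - (2 * m) • (Pi.single c 1 : V → ℝ) := by
    intro c h heq
    have hoff : ∀ v, v ≠ c → (G.lapMatrix ℝ *ᵥ h) v = (G.degree v : ℝ) := by
      intro v hv
      rw [G.lapMatrix_mulVec_apply]
      have := heq v hv
      linarith
    have hsum := sum_lapMatrix_mulVec G h
    have hc : (G.lapMatrix ℝ *ᵥ h) c = (G.degree c : ℝ) - 2 * m := by
      have hsplit : ∑ v, (G.lapMatrix ℝ *ᵥ h) v
          = (G.lapMatrix ℝ *ᵥ h) c + ∑ v ∈ Finset.univ.erase c, (G.lapMatrix ℝ *ᵥ h) v := by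
        rw [← Finset.add_sum_erase _ _ (Finset.mem_univ c)]
      have h2 : ∑ v ∈ Finset.univ.erase c, (G.lapMatrix ℝ *ᵥ h) v
          = ∑ v ∈ Finset.univ.erase c, (G.degree v : ℝ) :=
        Finset.sum_congr rfl fun v hv => hoff v (Finset.ne_of_mem_erase hv)
      have h3 : ∑ v, (G.degree v : ℝ)
          = (G.degree c : ℝ) + ∑ v ∈ Finset.univ.erase c, (G.degree v : ℝ) := by
        rw [← Finset.add_sum_erase _ _ (Finset.mem_univ c)]
      rw [hsplit, h2] at hsum
      linarith [hdegsum]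
    funext v
    by_cases hv : v = c
    · subst hv
      simp [hc, Pi.single_apply]
    · simp [hoff v hv, Pi.single_apply, hv]
  have h1 := key b hab hab_eq
  have h2 := key a hba hba_eq
  -- L *ᵥ (hab - hba - 2m • f) = 0
  set w : V → ℝ := hab - hba - (2 * m) • f with hw
  have hLw : G.lapMatrix ℝ *ᵥ w = 0 := by
    rw [hw, mulVec_sub, mulVec_sub, mulVec_smul, h1, h2, hf]
    funext v
    simp [Pi.single_apply, smul_sub]
  have hconst : w a = w b := by
    have := (G.lapMatrix_mulVec_eq_zero_iff_forall_reachable (x := w)).mp ?_ a b (hG a b)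
    · exact this
    · exact hLw
  have hdot : (Pi.single a 1 - Pi.single b 1) ⬝ᵥ f = f a - f b := by
    simp [sub_dotProduct, single_dotProduct]
  rw [hdot]
  have ha : w a = hab a - (2 * m) * f a := by simp [hw, hba_a]
  have hb : w b = -hba b - (2 * m) * f b := by simp [hw, hab_b]
  rw [ha, hb] at hconst
  linarith
end

section
/- Effective resistance R_{ab} = (e_a - e_b)ᵀ L⁺ (e_a - e_b) on a connected graph is a metric on the vertex set: it is nonnegative, zero iff a = b, symmetric, and satisfies the triangle inequality R_{ac} ≤ R_{ab} + R_{bc}. -/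
open Matrix Finset

section Aux
variable {V : Type*} [Fintype V] [DecidableEq V]

lemma lap_apply' (G : SimpleGraph V) [DecidableRel G.Adj] (u : V → ℝ) (x : V) :
    (G.lapMatrix ℝ *ᵥ u) x = ∑ y ∈ G.neighborFinset x, (u x - u y) := by
  rw [SimpleGraph.lapMatrix_mulVec_apply, Finset.sum_sub_distrib, Finset.sum_const,
    SimpleGraph.card_neighborFinset_eq_degree, nsmul_eq_mul]

omit [Fintype V] in
lemma walk_min (G : SimpleGraph V) [DecidableRel G.Adj] (u : V → ℝ) (m : ℝ) :
    ∀ {v t : V}, G.Walk v t →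
      (∀ x, u x = m → x ≠ t → ∀ w, G.Adj x w → u w = m) → u v = m → u t = m := by
  intro v t p
  induction p with
  | nil => exact fun _ h => h
  | @cons x y z hadj p ih =>
    intro key hv
    by_cases hxz : x = z
    · rwa [hxz] at hv
    · exact ih key (key x hv hxz y hadj)

lemma min_principle (G : SimpleGraph V) [DecidableRel G.Adj] (hG : G.Connected)
    (a b : V) (u : V → ℝ)
    (hu : G.lapMatrix ℝ *ᵥ u = Pi.single a 1 - Pi.single b 1) (x : V) :
    u b ≤ u x := by
  have : Nonempty V := hG.nonempty
  obtain ⟨x0, -, hx0⟩ := Finset.exists_min_image Finset.univ u ⟨x, mem_univ x⟩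
  have key : ∀ v, u v = u x0 → v ≠ b → ∀ w, G.Adj v w → u w = u x0 := by
    intro v hv hvb w hw
    have h1 : (G.lapMatrix ℝ *ᵥ u) v = (Pi.single a 1 - Pi.single b 1 : V → ℝ) v :=
      congrFun hu v
    rw [lap_apply'] at h1
    have hge : (0:ℝ) ≤ ∑ y ∈ G.neighborFinset v, (u v - u y) := by
      rw [h1]
      simp only [Pi.sub_apply, Pi.single_apply]
      have : (if v = b then (1:ℝ) else 0) = 0 := by simp [hvb]
      rw [this]
      split <;> norm_num
    have hle : ∀ y ∈ G.neighborFinset v, u v - u y ≤ 0 := by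
      intro y _
      have := hx0 y (mem_univ y)
      linarith [hv ▸ this]
    have hzero : ∑ y ∈ G.neighborFinset v, (u v - u y) = 0 :=
      le_antisymm (Finset.sum_nonpos hle) hge
    have := (Finset.sum_eq_zero_iff_of_nonpos hle).mp hzero w
      (by rwa [SimpleGraph.mem_neighborFinset])
    linarith [hv ▸ this]
  obtain ⟨p⟩ := hG.preconnected x0 b
  have hb : u b = u x0 := walk_min G u (u x0) p key rfl
  rw [hb]; exact hx0 x (mem_univ x)

lemma ker_endpoints (G : SimpleGraph V) [DecidableRel G.Adj] (hG : G.Connected)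
    (v : V → ℝ) (hv : G.lapMatrix ℝ *ᵥ v = 0) (x y : V) : v x = v y := by
  have h := (G.lapMatrix_mulVec_eq_zero_iff_forall_reachable (x := v)).mp
    hv x y (hG.preconnected x y)
  exact h

end Aux

/-- Effective resistance `R_{ab} = (e_a - e_b)ᵀ L⁺ (e_a - e_b)` on a connected
graph is a metric (Klein–Randić): nonnegative, zero iff the vertices coincide,
symmetric, and satisfying the triangle inequality. Here `L⁺(e_a - e_b)` is
represented by any solution `f a b` of the Laplacian system
`L (f a b) = e_a - e_b`. -/
theorem effective_resistance_is_metric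
    {V : Type*} [Fintype V] [DecidableEq V]
    (G : SimpleGraph V) [DecidableRel G.Adj] (hG : G.Connected)
    (f : V → V → V → ℝ)
    (hf : ∀ a b, G.lapMatrix ℝ *ᵥ f a b = (Pi.single a 1 - Pi.single b 1)) :
    let R : V → V → ℝ := fun a b => (Pi.single a 1 - Pi.single b 1) ⬝ᵥ f a b
    (∀ a b, 0 ≤ R a b)
    ∧ (∀ a b, R a b = 0 ↔ a = b)
    ∧ (∀ a b, R a b = R b a)
    ∧ (∀ a b c, R a c ≤ R a b + R b c) := by
  intro R
  have hR : ∀ a b, R a b = f a b a - f a b b := by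
    intro a b
    simp [R, sub_dotProduct, single_dotProduct]
  have hmin : ∀ a b x, f a b b ≤ f a b x := fun a b x =>
    min_principle G hG a b (f a b) (hf a b) x
  have hmax : ∀ a b x, f a b x ≤ f a b a := by
    intro a b x
    have h : G.lapMatrix ℝ *ᵥ (-(f a b)) = Pi.single b 1 - Pi.single a 1 := by
      rw [mulVec_neg, hf]; abel
    have := min_principle G hG b a (-(f a b)) h x
    simpa using this
  refine ⟨?_, ?_, ?_, ?_⟩
  · intro a b; rw [hR]; linarith [hmin a b a]
  · intro a b
    constructor
    · intro h0
      by_contra hab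
      have hconst : ∀ x, f a b x = f a b b := by
        intro x
        have h1 := hmin a b x
        have h2 := hmax a b x
        have h3 : f a b a = f a b b := by rw [hR] at h0; linarith
        linarith [hmax a b x]
      have hker : G.lapMatrix ℝ *ᵥ f a b = 0 := by
        funext x
        rw [lap_apply']
        apply Finset.sum_eq_zero
        intro y _
        rw [hconst x, hconst y, sub_self]
      rw [hf] at hker
      have := congrFun hker a
      simp [Pi.single_apply, hab] at this
    · intro h; subst h; rw [hR, sub_self]
  · intro a b
    have hker : G.lapMatrix ℝ *ᵥ (f a b + f b a) = 0 := by
      rw [mulVec_add, hf, hf]; abel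
    have h := ker_endpoints G hG (f a b + f b a) hker a b
    simp only [Pi.add_apply] at h
    rw [hR, hR]; linarith
  · intro a b c
    have hker : G.lapMatrix ℝ *ᵥ (f a c - f a b - f b c) = 0 := by
      rw [mulVec_sub, mulVec_sub, hf, hf, hf]; abel
    have h := ker_endpoints G hG (f a c - f a b - f b c) hker a c
    simp only [Pi.sub_apply] at h
    rw [hR, hR, hR]
    have h1 := hmin a b c
    have h2 := hmax b c a
    linarith
end
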